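/- Let Γ be a Coxeter graph, G a group of symmetries of Γ with all orbits of S finite, and Φ the canonical root system. Then the following are equivalent: (a) every positive root α ∈ Φ⁺ equals w(α_s) for some w ∈ W^G and s ∈ S; (b) every root α ∈ Φ equals w(α_s) for some w ∈ W^G and s ∈ S. -/

import Mathlib

open Real

/-- A Coxeter matrix on the set `S`, with `0` representing the label `∞`. -/
structure CoxeterMat (S : Type*) where
  m : S → S → ℕ
  diagonal : ∀ s, m s s = 1
  symmetric : ∀ s t, m s t = m t s
  off_diagonal : ∀ s t, s ≠ t → m s t ≠ 1

namespace CoxeterMat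

variable {S : Type*} (M : CoxeterMat S)

/-- The coefficient `⟨α_s, α_t⟩ = -2 cos (π / m_{s,t})`, with value `-2` when `m_{s,t} = ∞`. -/
noncomputable def c (s t : S) : ℝ :=
  if M.m s t = 0 then -2 else -2 * Real.cos (Real.pi / (M.m s t : ℝ))

/-- The simple root `α_s` in `V = ⊕_{s ∈ S} ℝ α_s`. -/
noncomputable def sroot (s : S) : S →₀ ℝ := Finsupp.single s 1

/-- The canonical bilinear form of the Coxeter graph. -/
noncomputable def bform : (S →₀ ℝ) →ₗ[ℝ] (S →₀ ℝ) →ₗ[ℝ] ℝ :=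
  Finsupp.lift _ ℝ S fun s => Finsupp.lift ℝ ℝ S fun t => M.c s t

/-- The simple reflection `σ_s : x ↦ x - ⟨α_s, x⟩ α_s`. -/
noncomputable def sigma (s : S) : (S →₀ ℝ) →ₗ[ℝ] (S →₀ ℝ) :=
  LinearMap.id - (M.bform (sroot s)).smulRight (sroot s)

/-- The Coxeter group `W`, realized as the subgroup of linear automorphisms of `V`
generated by the simple reflections. -/
noncomputable def Wgrp : Subgroup ((S →₀ ℝ) ≃ₗ[ℝ] (S →₀ ℝ)) :=
  Subgroup.closure {w | ∃ s : S, (w : (S →₀ ℝ) →ₗ[ℝ] (S →₀ ℝ)) = M.sigma s}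

/-- The canonical root system `Φ = {w(α_s) | w ∈ W, s ∈ S}`. -/
def Phi : Set (S →₀ ℝ) := {b | ∃ w ∈ M.Wgrp, ∃ s : S, b = w (sroot s)}

/-- The set of positive roots. -/
def PhiPos : Set (S →₀ ℝ) := {b | b ∈ M.Phi ∧ ∀ s, 0 ≤ b s}

/-- The equivalence relation `≡` on `Φ` generated by `α ≡₁ β ⟺ ⟨α, β⟩ ∉ {0, 1, -1}`. -/
def equivR : (S →₀ ℝ) → (S →₀ ℝ) → Prop :=
  Relation.EqvGen (fun a b => a ∈ M.Phi ∧ b ∈ M.Phi ∧ M.bform a b ∉ ({0, 1, -1} : Set ℝ))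

/-- The underlying graph of the Coxeter graph: `s` and `t` are joined iff `m_{s,t} ≥ 3`
(including `m_{s,t} = ∞`). -/
def graph : SimpleGraph S where
  Adj s t := s ≠ t ∧ M.m s t ≠ 2
  symm := ⟨fun s t h => ⟨h.1.symm, by rw [M.symmetric]; exact h.2⟩⟩
  loopless := ⟨fun s h => h.1 rfl⟩

/-- The action of a permutation of `S` on `V`. -/
noncomputable def permV (g : Equiv.Perm S) : (S →₀ ℝ) ≃ₗ[ℝ] (S →₀ ℝ) :=
  Finsupp.domLCongr g

/-- The set of elements of `W` fixed by the group `G` of symmetries (acting by conjugation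
by the corresponding permutations of coordinates). -/
noncomputable def WfixG (G : Subgroup (Equiv.Perm S)) :
    Set ((S →₀ ℝ) ≃ₗ[ℝ] (S →₀ ℝ)) :=
  {w | w ∈ M.Wgrp ∧ ∀ g ∈ G, permV g * w = w * permV g}

/-- Construct a simply laced Coxeter matrix from an adjacency relation. -/
noncomputable def ofAdj (A : S → S → Prop) (hs : ∀ s t, A s t → A t s)
    (hi : ∀ s, ¬ A s s) : CoxeterMat S where
  m s t := open Classical in if s = t then 1 else if A s t then 3 else 2
  diagonal s := by simp
  symmetric s t := by
    classical
    by_cases h : s = t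
    · subst h; rfl
    · have h' : t ≠ s := Ne.symm h
      simp only [if_neg h, if_neg h']
      by_cases hA : A s t
      · rw [if_pos hA, if_pos (hs s t hA)]
      · rw [if_neg hA, if_neg (fun h2 => hA (hs t s h2))]
  off_diagonal s t h := by
    classical
    simp only [if_neg h]
    split <;> norm_num

/-- Isomorphism of Coxeter graphs. -/
def Iso {T : Type*} (M : CoxeterMat S) (N : CoxeterMat T) : Prop :=
  ∃ e : S ≃ T, ∀ s t, N.m (e s) (e t) = M.m s t

/-- The full Coxeter subgraph spanned by `Y ⊆ S`. -/
def restrict (Y : Set S) : CoxeterMat Y where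
  m s t := M.m s t
  diagonal s := M.diagonal s
  symmetric s t := M.symmetric s t
  off_diagonal s t h := M.off_diagonal s t (fun hh => h (Subtype.ext hh))

end CoxeterMat

open CoxeterMat

/-- The Coxeter graph `A_n`: a path with `n` vertices. -/
noncomputable def pathA (n : ℕ) : CoxeterMat (Fin n) :=
  ofAdj (fun i j => i.val + 1 = j.val ∨ j.val + 1 = i.val)
    (fun _ _ h => h.symm)
    (fun s h => by rcases h with h | h <;> omega)

/-- The Coxeter graph `D_n`: a path `0 — 1 — ⋯ — (n-2)` together with an extra vertex `n-1`
joined to `n-3`. -/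
noncomputable def Dmat (n : ℕ) : CoxeterMat (Fin n) :=
  ofAdj (fun i j => i ≠ j ∧
      (((i.val + 1 = j.val ∧ j.val ≤ n - 2) ∨ (i.val + 2 = j.val ∧ j.val = n - 1)) ∨
       ((j.val + 1 = i.val ∧ i.val ≤ n - 2) ∨ (j.val + 2 = i.val ∧ i.val = n - 1))))
    (fun _ _ h => ⟨h.1.symm, h.2.symm⟩)
    (fun s h => h.1 rfl)

/-- Adjacency relation determined by a list of edges. -/
def listAdj {n : ℕ} (L : List (Fin n × Fin n)) (i j : Fin n) : Prop :=
  (i, j) ∈ L ∨ (j, i) ∈ L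

instance {n : ℕ} (L : List (Fin n × Fin n)) (i j : Fin n) : Decidable (listAdj L i j) := by
  unfold listAdj; infer_instance

/-- The Coxeter graph `E₆`. -/
noncomputable def E6mat : CoxeterMat (Fin 6) :=
  ofAdj (listAdj [(0,2),(2,3),(3,4),(4,5),(1,3)])
    (fun _ _ h => h.symm) (by decide)

/-- The Coxeter graph `E₇`. -/
noncomputable def E7mat : CoxeterMat (Fin 7) :=
  ofAdj (listAdj [(0,2),(2,3),(3,4),(4,5),(5,6),(1,3)])
    (fun _ _ h => h.symm) (by decide)

/-- The Coxeter graph `E₈`. -/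
noncomputable def E8mat : CoxeterMat (Fin 8) :=
  ofAdj (listAdj [(0,2),(2,3),(3,4),(4,5),(5,6),(6,7),(1,3)])
    (fun _ _ h => h.symm) (by decide)

/-- The Coxeter graph `A_∞`: the one-sided infinite path. -/
noncomputable def Ainf : CoxeterMat ℕ :=
  ofAdj (fun i j => i + 1 = j ∨ j + 1 = i)
    (fun _ _ h => h.symm)
    (fun s h => by omega)

/-- The Coxeter graph `_∞A_∞`: the two-sided infinite path. -/
noncomputable def ZAinf : CoxeterMat ℤ :=
  ofAdj (fun i j => i + 1 = j ∨ j + 1 = i)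
    (fun _ _ h => h.symm)
    (fun s h => by omega)

/-- The Coxeter graph `D_∞`: vertices `0, 1, 2, 3, …` with `0` and `1` joined to `2` and a
path `2 — 3 — 4 — ⋯`. -/
noncomputable def Dinf : CoxeterMat ℕ :=
  ofAdj (fun i j => i ≠ j ∧
      (((i = 0 ∧ j = 2) ∨ (i = 1 ∧ j = 2) ∨ (i + 1 = j ∧ 2 ≤ i)) ∨
       ((j = 0 ∧ i = 2) ∨ (j = 1 ∧ i = 2) ∨ (j + 1 = i ∧ 2 ≤ j))))
    (fun _ _ h => ⟨h.1.symm, h.2.symm⟩)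
    (fun s h => h.1 rfl)

/-- The affine Coxeter graph `Ã_n`: a cycle with `n + 1` vertices. -/
noncomputable def affA (n : ℕ) : CoxeterMat (ZMod (n + 1)) :=
  ofAdj (fun i j => i ≠ j ∧ (i + 1 = j ∨ j + 1 = i))
    (fun _ _ h => ⟨h.1.symm, h.2.symm⟩)
    (fun s h => h.1 rfl)

/-- The affine Coxeter graph `D̃_n` (on `n + 1` vertices, Bourbaki numbering): `0` and `1`
joined to `2`, a path `2 — 3 — ⋯ — (n-1)`, and `n` joined to `n-2`. -/
noncomputable def affD (n : ℕ) : CoxeterMat (Fin (n + 1)) :=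
  ofAdj (fun i j => i ≠ j ∧
      (((i.val = 0 ∧ j.val = 2) ∨ (i.val = 1 ∧ j.val = 2) ∨
        (i.val + 1 = j.val ∧ 2 ≤ i.val ∧ i.val ≤ n - 2) ∨
        (i.val = n - 2 ∧ j.val = n)) ∨
       ((j.val = 0 ∧ i.val = 2) ∨ (j.val = 1 ∧ i.val = 2) ∨
        (j.val + 1 = i.val ∧ 2 ≤ j.val ∧ j.val ≤ n - 2) ∨
        (j.val = n - 2 ∧ i.val = n))))
    (fun _ _ h => ⟨h.1.symm, h.2.symm⟩)
    (fun s h => h.1 rfl)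

/-- The affine Coxeter graph `Ẽ₆` (Bourbaki numbering, affine vertex `0`). -/
noncomputable def affE6 : CoxeterMat (Fin 7) :=
  ofAdj (listAdj [(1,3),(3,4),(4,5),(5,6),(2,4),(0,2)])
    (fun _ _ h => h.symm) (by decide)

/-- The affine Coxeter graph `Ẽ₇` (Bourbaki numbering, affine vertex `0`). -/
noncomputable def affE7 : CoxeterMat (Fin 8) :=
  ofAdj (listAdj [(0,1),(1,3),(3,4),(4,5),(5,6),(6,7),(2,4)])
    (fun _ _ h => h.symm) (by decide)

/-- The affine Coxeter graph `Ẽ₈` (Bourbaki numbering, affine vertex `0`). -/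
noncomputable def affE8 : CoxeterMat (Fin 9) :=
  ofAdj (listAdj [(1,3),(3,4),(4,5),(5,6),(6,7),(7,8),(2,4),(0,8)])
    (fun _ _ h => h.symm) (by decide)

/-! ### Auxiliary development for stmt19 -/

namespace CoxeterMat

variable {S : Type*} (M : CoxeterMat S)

lemma c_diag (s : S) : M.c s s = 2 := by
  unfold c
  rw [M.diagonal s]
  norm_num

lemma c_symm (s t : S) : M.c s t = M.c t s := by
  unfold c
  rw [M.symmetric s t]

lemma c_nonpos {s t : S} (h : s ≠ t) : M.c s t ≤ 0 := by
  unfold c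
  split
  · norm_num
  · rename_i hm
    have h2 : 2 ≤ M.m s t := by
      have := M.off_diagonal s t h
      omega
    have hpos : (0:ℝ) < (M.m s t : ℝ) := by
      have : (0:ℕ) < M.m s t := by omega
      exact_mod_cast this
    have h2' : (2:ℝ) ≤ (M.m s t : ℝ) := by exact_mod_cast h2
    have : 0 ≤ Real.cos (Real.pi / (M.m s t : ℝ)) := by
      apply Real.cos_nonneg_of_mem_Icc
      rw [Set.mem_Icc]
      constructor
      · have : 0 ≤ Real.pi / (M.m s t : ℝ) := by positivity
        nlinarith [Real.pi_pos]
      · rw [div_le_div_iff₀ hpos (by norm_num : (0:ℝ) < 2)]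
        nlinarith [Real.pi_pos]
    nlinarith

lemma bform_sroot_sroot (s t : S) : M.bform (sroot s) (sroot t) = M.c s t := by
  unfold bform sroot
  simp [Finsupp.lift_apply, Finsupp.sum_single_index]

lemma bform_symm (x y : S →₀ ℝ) : M.bform x y = M.bform y x := by
  have : M.bform = M.bform.flip := by
    apply Finsupp.lhom_ext'
    intro a
    apply LinearMap.ext
    intro r
    apply Finsupp.lhom_ext'
    intro b
    apply LinearMap.ext
    intro q
    have h1 : Finsupp.single a r = r • sroot a := by
      simp [sroot, Finsupp.smul_single]
    have h2 : Finsupp.single b q = q • sroot b := by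
      simp [sroot, Finsupp.smul_single]
    simp only [LinearMap.comp_apply, Finsupp.lsingle_apply, LinearMap.flip_apply, h1, h2,
      map_smul, LinearMap.smul_apply, bform_sroot_sroot]
    try rw [M.c_symm a b]
    try ring
  conv_lhs => rw [this]
  try rfl

lemma sigma_apply (s : S) (x : S →₀ ℝ) :
    M.sigma s x = x - (M.bform (sroot s) x) • sroot s := rfl

lemma sigma_sroot (s t : S) :
    M.sigma s (sroot t) = sroot t - (M.c s t) • sroot s := by
  rw [sigma_apply, bform_sroot_sroot]

lemma sigma_sroot_self (s : S) : M.sigma s (sroot s) = - sroot s := by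
  rw [sigma_sroot, c_diag]
  module

lemma sigma_involutive (s : S) : Function.Involutive (M.sigma s) := by
  intro x
  rw [sigma_apply, sigma_apply]
  have hb : M.bform (sroot s) (x - (M.bform (sroot s) x) • sroot s)
      = - (M.bform (sroot s) x) := by
    rw [map_sub, map_smul]
    rw [bform_sroot_sroot, c_diag]
    simp only [smul_eq_mul]
    ring
  rw [hb]
  module

/-- The simple reflection as a linear equivalence. -/
noncomputable def sigmaE (s : S) : (S →₀ ℝ) ≃ₗ[ℝ] (S →₀ ℝ) :=
  LinearEquiv.ofInvolutive (M.sigma s) (M.sigma_involutive s)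

@[simp] lemma sigmaE_apply (s : S) (x : S →₀ ℝ) : M.sigmaE s x = M.sigma s x := rfl

lemma sigmaE_coe (s : S) : (M.sigmaE s : (S →₀ ℝ) →ₗ[ℝ] (S →₀ ℝ)) = M.sigma s := rfl

lemma sigmaE_mem_Wgrp (s : S) : M.sigmaE s ∈ M.Wgrp :=
  Subgroup.subset_closure ⟨s, rfl⟩

lemma sigmaE_mul_self (s : S) : M.sigmaE s * M.sigmaE s = 1 := by
  apply LinearEquiv.toLinearMap_injective
  apply LinearMap.ext
  intro x
  exact M.sigma_involutive s x

lemma mulE_apply {V : Type*} [AddCommGroup V] [Module ℝ V] (u v : V ≃ₗ[ℝ] V) (x : V) :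
    (u * v) x = u (v x) := rfl

lemma oneE_apply {V : Type*} [AddCommGroup V] [Module ℝ V] (x : V) :
    (1 : V ≃ₗ[ℝ] V) x = x := rfl

lemma invE_apply {V : Type*} [AddCommGroup V] [Module ℝ V] (u : V ≃ₗ[ℝ] V) (x : V) :
    u⁻¹ x = u.symm x := rfl

lemma bform_sigma_sigma (s : S) (x y : S →₀ ℝ) :
    M.bform (M.sigma s x) (M.sigma s y) = M.bform x y := by
  rw [sigma_apply, sigma_apply]
  simp only [map_sub, map_smul, LinearMap.sub_apply, LinearMap.smul_apply,
    bform_sroot_sroot, c_diag, smul_eq_mul]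
  have h1 : (M.bform x) (sroot s) = (M.bform (sroot s)) x := M.bform_symm _ _
  rw [h1]
  ring

lemma bform_w_w {w : (S →₀ ℝ) ≃ₗ[ℝ] (S →₀ ℝ)} (hw : w ∈ M.Wgrp) (x y : S →₀ ℝ) :
    M.bform (w x) (w y) = M.bform x y := by
  revert x y
  induction hw using Subgroup.closure_induction with
  | mem w' hw' =>
      obtain ⟨s, hs⟩ := hw'
      intro x y
      have hx : w' x = M.sigma s x := by rw [← hs]; rfl
      have hy : w' y = M.sigma s y := by rw [← hs]; rfl
      rw [hx, hy, bform_sigma_sigma]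
  | one => intro x y; rfl
  | mul u v _ _ hu hv =>
      intro x y
      rw [mulE_apply, mulE_apply, hu, hv]
  | inv u _ hu =>
      intro x y
      have h := (hu (u⁻¹ x) (u⁻¹ y)).symm
      rw [invE_apply, invE_apply, LinearEquiv.apply_symm_apply, LinearEquiv.apply_symm_apply] at h
      rw [invE_apply, invE_apply]
      exact h

end CoxeterMat

namespace CoxeterMat

/-- The Chebyshev-like sequence `U 0 = 0`, `U 1 = 1`, `U (k+2) = a * U (k+1) - U k`. -/
noncomputable def Useq (a : ℝ) : ℕ → ℝ
  | 0 => 0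
  | 1 => 1
  | (k+2) => a * Useq a (k+1) - Useq a k

@[simp] lemma Useq_zero (a : ℝ) : Useq a 0 = 0 := rfl
@[simp] lemma Useq_one (a : ℝ) : Useq a 1 = 1 := rfl
lemma Useq_add_two (a : ℝ) (k : ℕ) : Useq a (k+2) = a * Useq a (k+1) - Useq a k := rfl

section Trig

variable {m : ℕ} (hm : 2 ≤ m)

lemma theta_pos (hm : 2 ≤ m) : 0 < Real.pi / m := by
  have : (0:ℝ) < m := by exact_mod_cast Nat.lt_of_lt_of_le (by norm_num) hm
  positivity

lemma theta_lt_pi (hm : 2 ≤ m) : Real.pi / m < Real.pi := by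
  have h2 : (2:ℝ) ≤ (m:ℝ) := by exact_mod_cast hm
  rw [div_lt_iff₀ (by linarith)]
  nlinarith [Real.pi_pos]

lemma sin_theta_pos (hm : 2 ≤ m) : 0 < Real.sin (Real.pi / m) :=
  Real.sin_pos_of_pos_of_lt_pi (theta_pos hm) (theta_lt_pi hm)

lemma Useq_eq_sin (hm : 2 ≤ m) (k : ℕ) :
    Useq (2 * Real.cos (Real.pi / m)) k
      = Real.sin (k * (Real.pi / m)) / Real.sin (Real.pi / m) := by
  set θ := Real.pi / m with hθ
  have hs := sin_theta_pos hm
  induction k using Nat.twoStepInduction with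
  | zero => simp
  | one => simp [div_self (ne_of_gt hs)]; exact (div_self (ne_of_gt hs)).symm
  | more k ih1 ih2 =>
      rw [Useq_add_two, ih1, ih2]
      have key : Real.sin (((k:ℝ)+2)*θ)
          = 2*Real.cos θ*Real.sin (((k:ℝ)+1)*θ) - Real.sin ((k:ℝ)*θ) := by
        have e1 : ((k:ℝ)+2)*θ = ((k:ℝ)+1)*θ + θ := by ring
        have e2 : (k:ℝ)*θ = ((k:ℝ)+1)*θ - θ := by ring
        rw [e1, e2, Real.sin_add, Real.sin_sub]
        ring
      push_cast
      rw [key]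
      field_simp

lemma Useq_nonneg_sin (hm : 2 ≤ m) {k : ℕ} (hk : k ≤ m) :
    0 ≤ Useq (2 * Real.cos (Real.pi / m)) k := by
  rw [Useq_eq_sin hm]
  apply div_nonneg _ (le_of_lt (sin_theta_pos hm))
  apply Real.sin_nonneg_of_nonneg_of_le_pi
  · positivity
  · have hk' : (k:ℝ) ≤ (m:ℝ) := by exact_mod_cast hk
    have h0 : (0:ℝ) < m := by exact_mod_cast Nat.lt_of_lt_of_le (by norm_num) hm
    rw [div_eq_mul_inv, mul_comm Real.pi]
    calc (k:ℝ) * ((m:ℝ)⁻¹ * Real.pi) ≤ (m:ℝ) * ((m:ℝ)⁻¹ * Real.pi) := by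
          apply mul_le_mul_of_nonneg_right hk'
          positivity
      _ = Real.pi := by field_simp

lemma m_ne_zero_real (hm : 2 ≤ m) : ((m:ℝ)) ≠ 0 := by
  have : (0:ℝ) < m := by exact_mod_cast Nat.lt_of_lt_of_le (by norm_num) hm
  linarith

lemma Useq_two_mul_m (hm : 2 ≤ m) : Useq (2 * Real.cos (Real.pi / m)) (2*m) = 0 := by
  rw [Useq_eq_sin hm]
  have : ((2*m : ℕ) : ℝ) * (Real.pi / m) = 2 * Real.pi := by
    push_cast; field_simp
  rw [this, Real.sin_two_pi, zero_div]

lemma Useq_two_mul_m_add_one (hm : 2 ≤ m) :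
    Useq (2 * Real.cos (Real.pi / m)) (2*m+1) = 1 := by
  rw [Useq_eq_sin hm]
  have : ((2*m+1 : ℕ) : ℝ) * (Real.pi / m) = Real.pi / m + 2 * Real.pi := by
    push_cast; field_simp; ring
  rw [this, Real.sin_add_two_pi, div_self (ne_of_gt (sin_theta_pos hm))]

lemma sum_sin_even (hm : 2 ≤ m) :
    ∑ r ∈ Finset.range m, Real.sin ((2*(r:ℝ)) * (Real.pi / m)) = 0 := by
  set θ := Real.pi / m with hθ
  have hs := sin_theta_pos hm
  have key : ∀ r : ℕ, Real.cos ((2*(r:ℝ)-1)*θ) - Real.cos ((2*((r:ℝ)+1)-1)*θ)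
      = 2 * Real.sin ((2*(r:ℝ))*θ) * Real.sin θ := by
    intro r
    rw [Real.cos_sub_cos]
    have e1 : ((2*(r:ℝ)-1)*θ + (2*((r:ℝ)+1)-1)*θ)/2 = (2*(r:ℝ))*θ := by ring
    have e2 : ((2*(r:ℝ)-1)*θ - (2*((r:ℝ)+1)-1)*θ)/2 = -θ := by ring
    rw [e1, e2, Real.sin_neg]
    ring
  have tele := Finset.sum_range_sub' (fun r : ℕ => Real.cos ((2*(r:ℝ)-1)*θ)) m
  have expand : ∑ r ∈ Finset.range m,
      (Real.cos ((2*(r:ℝ)-1)*θ) - Real.cos ((2*((r:ℝ)+1)-1)*θ))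
      = 2 * Real.sin θ * ∑ r ∈ Finset.range m, Real.sin ((2*(r:ℝ))*θ) := by
    rw [Finset.mul_sum]
    apply Finset.sum_congr rfl
    intro r _
    rw [key r]; ring
  have ends : Real.cos ((2*((0:ℕ):ℝ)-1)*θ) - Real.cos ((2*((m:ℕ):ℝ)-1)*θ) = 0 := by
    have e0 : (2*((0:ℕ):ℝ)-1)*θ = -θ := by push_cast; ring
    have em : (2*((m:ℕ):ℝ)-1)*θ = 2*Real.pi - θ := by
      rw [hθ]; field_simp [m_ne_zero_real hm]
    rw [e0, em, Real.cos_neg, Real.cos_two_pi_sub]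
    ring
  have trans : ∑ r ∈ Finset.range m,
      (Real.cos ((2*(r:ℝ)-1)*θ) - Real.cos ((2*((r:ℝ)+1)-1)*θ)) = 0 := by
    have step : ∀ r : ℕ, Real.cos ((2*((r:ℝ)+1)-1)*θ)
        = (fun n : ℕ => Real.cos ((2*(n:ℝ)-1)*θ)) (r+1) := by
      intro r; push_cast; ring_nf
    calc ∑ r ∈ Finset.range m, (Real.cos ((2*(r:ℝ)-1)*θ) - Real.cos ((2*((r:ℝ)+1)-1)*θ))
        = ∑ r ∈ Finset.range m, ((fun n : ℕ => Real.cos ((2*(n:ℝ)-1)*θ)) r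
            - (fun n : ℕ => Real.cos ((2*(n:ℝ)-1)*θ)) (r+1)) := by
          apply Finset.sum_congr rfl
          intro r _
          rw [step r]
      _ = (fun n : ℕ => Real.cos ((2*(n:ℝ)-1)*θ)) 0
            - (fun n : ℕ => Real.cos ((2*(n:ℝ)-1)*θ)) m := tele
      _ = 0 := ends
  rw [expand] at trans
  have h2s : (2 * Real.sin θ) ≠ 0 := by positivity
  exact (mul_eq_zero.mp trans).resolve_left h2s

lemma sum_sin_odd (hm : 2 ≤ m) :
    ∑ r ∈ Finset.range m, Real.sin ((2*(r:ℝ)+1) * (Real.pi / m)) = 0 := by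
  set θ := Real.pi / m with hθ
  have hs := sin_theta_pos hm
  have key : ∀ r : ℕ, Real.cos ((2*(r:ℝ))*θ) - Real.cos ((2*((r:ℝ)+1))*θ)
      = 2 * Real.sin ((2*(r:ℝ)+1)*θ) * Real.sin θ := by
    intro r
    rw [Real.cos_sub_cos]
    have e1 : ((2*(r:ℝ))*θ + (2*((r:ℝ)+1))*θ)/2 = (2*(r:ℝ)+1)*θ := by ring
    have e2 : ((2*(r:ℝ))*θ - (2*((r:ℝ)+1))*θ)/2 = -θ := by ring
    rw [e1, e2, Real.sin_neg]
    ring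
  have tele := Finset.sum_range_sub' (fun r : ℕ => Real.cos ((2*(r:ℝ))*θ)) m
  have ends : Real.cos ((2*((0:ℕ):ℝ))*θ) - Real.cos ((2*((m:ℕ):ℝ))*θ) = 0 := by
    have e0 : (2*((0:ℕ):ℝ))*θ = 0 := by push_cast; ring
    have em : (2*((m:ℕ):ℝ))*θ = 2*Real.pi := by
      rw [hθ]; field_simp [m_ne_zero_real hm]
    rw [e0, em, Real.cos_zero, Real.cos_two_pi]
    ring
  have trans : ∑ r ∈ Finset.range m,
      (Real.cos ((2*(r:ℝ))*θ) - Real.cos ((2*((r:ℝ)+1))*θ)) = 0 := by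
    have step : ∀ r : ℕ, Real.cos ((2*((r:ℝ)+1))*θ)
        = (fun n : ℕ => Real.cos ((2*(n:ℝ))*θ)) (r+1) := by
      intro r; push_cast; ring_nf
    calc ∑ r ∈ Finset.range m, (Real.cos ((2*(r:ℝ))*θ) - Real.cos ((2*((r:ℝ)+1))*θ))
        = ∑ r ∈ Finset.range m, ((fun n : ℕ => Real.cos ((2*(n:ℝ))*θ)) r
            - (fun n : ℕ => Real.cos ((2*(n:ℝ))*θ)) (r+1)) := by
          apply Finset.sum_congr rfl
          intro r _
          rw [step r]
      _ = _ := tele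
      _ = 0 := ends
  have expand : ∑ r ∈ Finset.range m,
      (Real.cos ((2*(r:ℝ))*θ) - Real.cos ((2*((r:ℝ)+1))*θ))
      = 2 * Real.sin θ * ∑ r ∈ Finset.range m, Real.sin ((2*(r:ℝ)+1)*θ) := by
    rw [Finset.mul_sum]
    apply Finset.sum_congr rfl
    intro r _
    rw [key r]; ring
  rw [expand] at trans
  have h2s : (2 * Real.sin θ) ≠ 0 := by positivity
  exact (mul_eq_zero.mp trans).resolve_left h2s

lemma sum_Useq_even (hm : 2 ≤ m) :
    ∑ r ∈ Finset.range m, Useq (2 * Real.cos (Real.pi / m)) (2*r) = 0 := by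
  have : ∀ r : ℕ, Useq (2 * Real.cos (Real.pi / m)) (2*r)
      = Real.sin ((2*(r:ℝ)) * (Real.pi / m)) / Real.sin (Real.pi / m) := by
    intro r
    rw [Useq_eq_sin hm]
    push_cast
    ring_nf
  simp only [this]
  rw [← Finset.sum_div, sum_sin_even hm, zero_div]

lemma sum_Useq_odd (hm : 2 ≤ m) :
    ∑ r ∈ Finset.range m, Useq (2 * Real.cos (Real.pi / m)) (2*r+1) = 0 := by
  have : ∀ r : ℕ, Useq (2 * Real.cos (Real.pi / m)) (2*r+1)
      = Real.sin ((2*(r:ℝ)+1) * (Real.pi / m)) / Real.sin (Real.pi / m) := by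
    intro r
    rw [Useq_eq_sin hm]
    push_cast
    ring_nf
  simp only [this]
  rw [← Finset.sum_div, sum_sin_odd hm, zero_div]

end Trig

lemma Useq_two (k : ℕ) : Useq 2 k = k := by
  induction k using Nat.twoStepInduction with
  | zero => simp
  | one => simp
  | more k ih1 ih2 =>
      rw [Useq_add_two, ih1, ih2]
      push_cast
      ring

end CoxeterMat

namespace CoxeterMat

variable {S : Type*} (M : CoxeterMat S)

/-- Action of `(σ_i σ_j)^k` on the simple roots `α_i, α_j`. -/
lemma rho_pow_sroot (i j : S) (hij : i ≠ j) (k : ℕ) :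
    ((M.sigmaE i * M.sigmaE j)^k) (sroot i)
      = Useq (-(M.c i j)) (2*k+1) • sroot i + Useq (-(M.c i j)) (2*k) • sroot j
    ∧ ((M.sigmaE i * M.sigmaE j)^k) (sroot j)
      = (-(Useq (-(M.c i j)) (2*k))) • sroot i
        + (Useq (-(M.c i j)) (2*k+1) - (-(M.c i j)) * Useq (-(M.c i j)) (2*k)) • sroot j := by
  set a := M.c i j with ha
  have hji : M.c j i = a := by rw [ha, M.c_symm]
  have e1 : (M.sigmaE i * M.sigmaE j) (sroot i) = (a*a-1) • sroot i + (-a) • sroot j := by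
    rw [mulE_apply, sigmaE_apply, sigmaE_apply, sigma_sroot, hji, map_sub, map_smul,
      sigma_sroot_self, sigma_sroot, ← ha]
    module
  have e2 : (M.sigmaE i * M.sigmaE j) (sroot j) = a • sroot i + (-1 : ℝ) • sroot j := by
    rw [mulE_apply, sigmaE_apply, sigmaE_apply, sigma_sroot_self, map_neg, sigma_sroot, ← ha]
    module
  induction k with
  | zero => constructor <;> (simp [pow_zero]; try module)
  | succ k ih =>
      obtain ⟨ih1, ih2⟩ := ih
      have hpow : ∀ x : S →₀ ℝ, ((M.sigmaE i * M.sigmaE j)^(k+1)) x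
          = ((M.sigmaE i * M.sigmaE j)^k) ((M.sigmaE i * M.sigmaE j) x) := by
        intro x
        rw [pow_succ, mulE_apply]
      have r1 : Useq (-a) (2*k+2) = (-a) * Useq (-a) (2*k+1) - Useq (-a) (2*k) :=
        Useq_add_two (-a) (2*k)
      have r2 : Useq (-a) (2*k+3) = (-a) * Useq (-a) (2*k+2) - Useq (-a) (2*k+1) := by
        rw [show 2*k+3 = (2*k+1)+2 by omega]
        exact Useq_add_two (-a) (2*k+1)
      have hi1 : 2*(k+1)+1 = 2*k+3 := by omega
      have hi2 : 2*(k+1) = 2*k+2 := by omega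
      constructor
      · rw [hpow, e1, map_add, map_smul, map_smul, ih1, ih2, hi1, hi2, r2, r1]
        module
      · rw [hpow, e2, map_add, map_smul, map_smul, ih1, ih2, hi1, hi2, r2, r1]
        module

lemma rho_sroot_other (i j u : S) (hui : u ≠ i) (huj : u ≠ j) :
    (M.sigmaE i * M.sigmaE j) (sroot u)
      = sroot u + ((-(M.c i u) + M.c i j * M.c j u) • sroot i + (-(M.c j u)) • sroot j) := by
  rw [mulE_apply, sigmaE_apply, sigmaE_apply, sigma_sroot, map_sub, map_smul, sigma_sroot,
    sigma_sroot]
  module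

lemma rho_pow_sroot_other (i j u : S) (hui : u ≠ i) (huj : u ≠ j) (k : ℕ) :
    ((M.sigmaE i * M.sigmaE j)^k) (sroot u)
      = sroot u + ∑ r ∈ Finset.range k, ((M.sigmaE i * M.sigmaE j)^r)
          ((-(M.c i u) + M.c i j * M.c j u) • sroot i + (-(M.c j u)) • sroot j) := by
  induction k with
  | zero => simp
  | succ k ih =>
      have hpow : ∀ x : S →₀ ℝ, ((M.sigmaE i * M.sigmaE j)^(k+1)) x
          = ((M.sigmaE i * M.sigmaE j)^k) ((M.sigmaE i * M.sigmaE j) x) := by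
        intro x
        rw [pow_succ, mulE_apply]
      rw [hpow, rho_sroot_other M i j u hui huj, map_add, ih, Finset.sum_range_succ]
      abel

lemma c_eq_cos {i j : S} (hij : i ≠ j) (hm : M.m i j ≠ 0) :
    -(M.c i j) = 2 * Real.cos (Real.pi / (M.m i j)) := by
  unfold c
  rw [if_neg hm]
  ring

lemma two_le_m {i j : S} (hij : i ≠ j) (hm : M.m i j ≠ 0) : 2 ≤ M.m i j := by
  have := M.off_diagonal i j hij
  omega

lemma rho_pow_m (i j : S) (hij : i ≠ j) (hm : M.m i j ≠ 0) :
    (M.sigmaE i * M.sigmaE j)^(M.m i j) = 1 := by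
  have h2m := M.two_le_m hij hm
  have hc := M.c_eq_cos hij hm
  set mm := M.m i j with hmm
  have hU0 : Useq (-(M.c i j)) (2*mm) = 0 := by rw [hc]; exact Useq_two_mul_m h2m
  have hU1 : Useq (-(M.c i j)) (2*mm+1) = 1 := by rw [hc]; exact Useq_two_mul_m_add_one h2m
  have hSe : ∑ r ∈ Finset.range mm, Useq (-(M.c i j)) (2*r) = 0 := by
    rw [hc]; exact sum_Useq_even h2m
  have hSo : ∑ r ∈ Finset.range mm, Useq (-(M.c i j)) (2*r+1) = 0 := by
    rw [hc]; exact sum_Useq_odd h2m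
  have hsum_i : ∑ r ∈ Finset.range mm, ((M.sigmaE i * M.sigmaE j)^r) (sroot i) = 0 := by
    have : ∀ r ∈ Finset.range mm, ((M.sigmaE i * M.sigmaE j)^r) (sroot i)
        = Useq (-(M.c i j)) (2*r+1) • sroot i + Useq (-(M.c i j)) (2*r) • sroot j :=
      fun r _ => (M.rho_pow_sroot i j hij r).1
    rw [Finset.sum_congr rfl this, Finset.sum_add_distrib, ← Finset.sum_smul, ← Finset.sum_smul,
      hSe, hSo, zero_smul, zero_smul, add_zero]
  have hsum_j : ∑ r ∈ Finset.range mm, ((M.sigmaE i * M.sigmaE j)^r) (sroot j) = 0 := by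
    have : ∀ r ∈ Finset.range mm, ((M.sigmaE i * M.sigmaE j)^r) (sroot j)
        = (-(Useq (-(M.c i j)) (2*r))) • sroot i
          + (Useq (-(M.c i j)) (2*r+1) - (-(M.c i j)) * Useq (-(M.c i j)) (2*r)) • sroot j :=
      fun r _ => (M.rho_pow_sroot i j hij r).2
    rw [Finset.sum_congr rfl this, Finset.sum_add_distrib, ← Finset.sum_smul, ← Finset.sum_smul]
    have e1 : ∑ r ∈ Finset.range mm, (-(Useq (-(M.c i j)) (2*r))) = 0 := by
      rw [Finset.sum_neg_distrib, hSe, neg_zero]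
    have e2 : ∑ r ∈ Finset.range mm,
        (Useq (-(M.c i j)) (2*r+1) - (-(M.c i j)) * Useq (-(M.c i j)) (2*r)) = 0 := by
      rw [Finset.sum_sub_distrib, hSo, ← Finset.mul_sum, hSe]
      ring
    rw [e1, e2, zero_smul, zero_smul, add_zero]
  apply LinearEquiv.toLinearMap_injective
  apply Finsupp.lhom_ext
  intro u b
  have hb : Finsupp.single u b = b • sroot u := by simp [sroot, Finsupp.smul_single]
  rw [LinearEquiv.coe_coe, LinearEquiv.coe_coe, hb, map_smul, map_smul, oneE_apply]
  congr 1
  by_cases hui : u = i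
  · subst hui
    rw [(M.rho_pow_sroot u j hij mm).1, hU0, hU1]
    module
  · by_cases huj : u = j
    · subst huj
      rw [(M.rho_pow_sroot i u hij mm).2, hU0, hU1]
      module
    · rw [M.rho_pow_sroot_other i j u (Ne.intro hui) (Ne.intro huj) mm]
      have : ∑ r ∈ Finset.range mm, ((M.sigmaE i * M.sigmaE j)^r)
          ((-(M.c i u) + M.c i j * M.c j u) • sroot i + (-(M.c j u)) • sroot j) = 0 := by
        have expand : ∀ r ∈ Finset.range mm, ((M.sigmaE i * M.sigmaE j)^r)
            ((-(M.c i u) + M.c i j * M.c j u) • sroot i + (-(M.c j u)) • sroot j)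
            = (-(M.c i u) + M.c i j * M.c j u) • (((M.sigmaE i * M.sigmaE j)^r) (sroot i))
              + (-(M.c j u)) • (((M.sigmaE i * M.sigmaE j)^r) (sroot j)) := by
          intro r _
          rw [map_add, map_smul, map_smul]
        rw [Finset.sum_congr rfl expand, Finset.sum_add_distrib, ← Finset.smul_sum,
          ← Finset.smul_sum, hsum_i, hsum_j, smul_zero, smul_zero, add_zero]
      rw [this, add_zero]

/-- The mathlib Coxeter matrix associated with `M`. -/
noncomputable def Mx : CoxeterMatrix S where
  M := fun s t => M.m s t
  isSymm := Matrix.IsSymm.ext (fun s t => M.symmetric t s)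
  diagonal := M.diagonal
  off_diagonal := M.off_diagonal

lemma liftable : CoxeterMatrix.IsLiftable M.Mx (fun s => M.sigmaE s) := by
  intro i i'
  by_cases h : i = i'
  · subst h
    have : M.Mx i i = 1 := M.diagonal i
    rw [this, pow_one]
    exact M.sigmaE_mul_self i
  · by_cases h0 : M.m i i' = 0
    · have : M.Mx i i' = 0 := h0
      rw [this, pow_zero]
    · exact M.rho_pow_m i i' h h0

/-- The homomorphism from the abstract Coxeter group to `GL(V)`. -/
noncomputable def phi : (M.Mx).Group →* ((S →₀ ℝ) ≃ₗ[ℝ] (S →₀ ℝ)) :=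
  (M.Mx).toCoxeterSystem.lift ⟨fun s => M.sigmaE s, M.liftable⟩

lemma phi_simple (s : S) : M.phi ((M.Mx).toCoxeterSystem.simple s) = M.sigmaE s := by
  unfold phi
  exact CoxeterSystem.lift_apply_simple _ M.liftable s

lemma Wgrp_le_range : M.Wgrp ≤ (M.phi).range := by
  apply Subgroup.closure_le _ |>.mpr
  rintro w ⟨s, hs⟩
  have hw : w = M.sigmaE s := by
    apply LinearEquiv.toLinearMap_injective
    rw [hs]
    rfl
  exact ⟨(M.Mx).toCoxeterSystem.simple s, by rw [phi_simple, hw]⟩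

end CoxeterMat

namespace CoxeterMat

open CoxeterSystem (alternatingWord)

/-- Words in the two letters `i`, `j`. -/
def IJword (i j : S') (ω : List S') : Prop := ∀ x ∈ ω, x = i ∨ x = j

variable {S : Type*} (M : CoxeterMat S)

/-- The Coxeter system of the abstract Coxeter group of `M`. -/
noncomputable def csys : CoxeterSystem M.Mx M.Mx.Group := (M.Mx).toCoxeterSystem

lemma Mx_apply (a b : S) : M.Mx a b = M.m a b := rfl

/-- `dlen i j u` : the minimal length of a word in `i, j` representing `u`. -/
noncomputable def dlen (i j : S) (u : M.Mx.Group) : ℕ :=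
  sInf {n | ∃ ω : List S, IJword i j ω ∧ ω.length = n ∧ M.csys.wordProd ω = u}

lemma dlen_le {i j : S} {u : M.Mx.Group} {ω : List S} (h : IJword i j ω)
    (hπ : M.csys.wordProd ω = u) : M.dlen i j u ≤ ω.length :=
  Nat.sInf_le ⟨ω, h, rfl, hπ⟩

lemma dlen_spec {i j : S} {u : M.Mx.Group} (hne : ∃ ω : List S, IJword i j ω ∧ M.csys.wordProd ω = u) :
    ∃ ω : List S, IJword i j ω ∧ ω.length = M.dlen i j u ∧ M.csys.wordProd ω = u := by
  obtain ⟨ω₀, h₀, hπ₀⟩ := hne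
  have : M.dlen i j u ∈ {n | ∃ ω : List S, IJword i j ω ∧ ω.length = n ∧ M.csys.wordProd ω = u} :=
    Nat.sInf_mem ⟨ω₀.length, ω₀, h₀, rfl, hπ₀⟩
  obtain ⟨ω, h1, h2, h3⟩ := this
  exact ⟨ω, h1, h2, h3⟩

lemma length_wordProd_mod_two (ω : List S) :
    M.csys.length (M.csys.wordProd ω) % 2 = ω.length % 2 := by
  induction ω with
  | nil => simp [CoxeterSystem.wordProd_nil]
  | cons c ω ih =>
      rw [CoxeterSystem.wordProd_cons]
      have h := M.csys.length_mul_mod_two (M.csys.simple c) (M.csys.wordProd ω)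
      rw [M.csys.length_simple] at h
      simp only [List.length_cons]
      omega

lemma length_le_dlen {i j : S} {u : M.Mx.Group}
    (hne : ∃ ω : List S, IJword i j ω ∧ M.csys.wordProd ω = u) :
    M.csys.length u ≤ M.dlen i j u := by
  obtain ⟨ω, _, h2, h3⟩ := M.dlen_spec hne
  have h := M.csys.length_wordProd_le ω
  rw [h3, h2] at h
  exact h

lemma dlen_mod_two {i j : S} {u : M.Mx.Group}
    (hne : ∃ ω : List S, IJword i j ω ∧ M.csys.wordProd ω = u) :
    M.dlen i j u % 2 = M.csys.length u % 2 := by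
  obtain ⟨ω, _, h2, h3⟩ := M.dlen_spec hne
  have h := M.length_wordProd_mod_two ω
  rw [h3, h2] at h
  exact h.symm

lemma IJword_alternatingWord (i j : S) : ∀ (k : ℕ) (a b : S),
    (a = i ∨ a = j) → (b = i ∨ b = j) → IJword i j (alternatingWord a b k) := by
  intro k
  induction k with
  | zero => intro a b _ _ x hx; simp [alternatingWord] at hx
  | succ k ih =>
      intro a b ha hb x hx
      rw [CoxeterSystem.alternatingWord_succ, List.concat_eq_append] at hx
      rcases List.mem_append.mp hx with hx' | hx'
      · exact ih b a hb ha x hx'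
      · rcases List.mem_singleton.mp hx' with rfl
        exact hb

lemma alt_mul_simple' (i j c : S) (hij : i ≠ j) (hc : c = i ∨ c = j) (k : ℕ)
    (hk : M.m i j ≠ 0 → k ≤ M.m i j) :
    ∃ (k' : ℕ) (a' b' : S), ((a' = i ∧ b' = j) ∨ (a' = j ∧ b' = i)) ∧ k' ≤ k + 1 ∧
      (M.m i j ≠ 0 → k' ≤ M.m i j) ∧
      M.csys.wordProd (alternatingWord i j k) * M.csys.simple c
        = M.csys.wordProd (alternatingWord a' b' k') := by
  have h2m : M.m i j ≠ 0 → 2 ≤ M.m i j := fun h0 => M.two_le_m hij h0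
  match k with
  | 0 =>
    rcases hc with rfl | rfl
    · refine ⟨1, j, c, Or.inr ⟨rfl, rfl⟩, by omega, fun h0 => by have := h2m h0; omega, ?_⟩
      have h1 : alternatingWord j c 1 = [c] := rfl
      have h0 : alternatingWord c j 0 = ([] : List S) := rfl
      rw [h1, h0, CoxeterSystem.wordProd_nil, CoxeterSystem.wordProd_singleton, one_mul]
    · refine ⟨1, i, c, Or.inl ⟨rfl, rfl⟩, by omega, fun h0 => by have := h2m h0; omega, ?_⟩
      have h1 : alternatingWord i c 1 = [c] := rfl
      have h0 : alternatingWord i c 0 = ([] : List S) := rfl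
      rw [h1, h0, CoxeterSystem.wordProd_nil, CoxeterSystem.wordProd_singleton, one_mul]
  | (k0+1) =>
    have hsucc : alternatingWord i j (k0+1) = (alternatingWord j i k0).concat j :=
      CoxeterSystem.alternatingWord_succ i j k0
    by_cases hcj : c = j
    · refine ⟨k0, j, i, Or.inr ⟨rfl, rfl⟩, by omega, fun h0 => by have := hk h0; omega, ?_⟩
      rw [hcj, hsucc, CoxeterSystem.wordProd_concat, M.csys.simple_mul_simple_cancel_right]
    · have hci : c = i := by tauto
      by_cases hkm : M.m i j ≠ 0 ∧ k0 + 1 = M.m i j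
      · obtain ⟨hm0, hkm'⟩ := hkm
        have h2 : 2 ≤ M.m i j := h2m hm0
        have hbraid : M.csys.wordProd (alternatingWord i j (M.Mx i j))
            = M.csys.wordProd (alternatingWord j i (M.Mx j i)) :=
          M.csys.wordProd_braidWord_eq i j
        have hMxij : M.Mx i j = M.m i j := rfl
        have hMxji : M.Mx j i = M.m i j := M.symmetric j i
        rw [hMxij, hMxji] at hbraid
        refine ⟨M.m i j - 1, i, j, Or.inl ⟨rfl, rfl⟩, by omega, fun _ => by omega, ?_⟩
        have hm1 : M.m i j = (M.m i j - 1) + 1 := by omega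
        rw [hci, hkm', hbraid]
        conv_lhs => rw [hm1]
        rw [CoxeterSystem.alternatingWord_succ j i (M.m i j - 1),
          CoxeterSystem.wordProd_concat, M.csys.simple_mul_simple_cancel_right]
      · refine ⟨k0 + 2, j, i, Or.inr ⟨rfl, rfl⟩, by omega, ?_, ?_⟩
        · intro h0
          have hle := hk h0
          have : k0 + 1 ≠ M.m i j := fun hc' => hkm ⟨h0, hc'⟩
          omega
        · have hs2 : alternatingWord j i (k0+2) = (alternatingWord i j (k0+1)).concat i :=
            CoxeterSystem.alternatingWord_succ j i (k0+1)
          rw [hci, hs2, CoxeterSystem.wordProd_concat]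

lemma dihedral_rep (i j : S) (hij : i ≠ j) : ∀ ω : List S, IJword i j ω →
    ∃ (k : ℕ) (a b : S), ((a = i ∧ b = j) ∨ (a = j ∧ b = i)) ∧ k ≤ ω.length ∧
      (M.m i j ≠ 0 → k ≤ M.m i j) ∧
      M.csys.wordProd ω = M.csys.wordProd (alternatingWord a b k) := by
  intro ω
  induction ω using List.reverseRecOn with
  | nil =>
      intro _
      exact ⟨0, i, j, Or.inl ⟨rfl, rfl⟩, by omega, fun _ => by omega, rfl⟩
  | append_singleton ω' c ih =>
      intro hword
      have hω' : IJword i j ω' := fun x hx => hword x (by simp [hx])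
      have hc : c = i ∨ c = j := hword c (by simp)
      obtain ⟨k, a, b, hab, hkl, hkm, hrep⟩ := ih hω'
      have hsplit : M.csys.wordProd (ω' ++ [c]) = M.csys.wordProd ω' * M.csys.simple c := by
        rw [M.csys.wordProd_append, CoxeterSystem.wordProd_singleton]
      rcases hab with ⟨rfl, rfl⟩ | ⟨rfl, rfl⟩
      · obtain ⟨k', a', b', hab', hk'1, hk'm, heq⟩ := M.alt_mul_simple' a b c hij hc k hkm
        refine ⟨k', a', b', hab', ?_, hk'm, ?_⟩
        · simp only [List.length_append, List.length_singleton]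
          omega
        · rw [hsplit, hrep, heq]
      · have hc' : c = a ∨ c = b := hc.symm
        have hkm' : M.m a b ≠ 0 → k ≤ M.m a b := by
          rw [M.symmetric a b]; exact hkm
        obtain ⟨k', a', b', hab', hk'1, hk'm, heq⟩ :=
          M.alt_mul_simple' a b c hij.symm hc' k hkm'
        refine ⟨k', a', b', hab'.symm, ?_, ?_, ?_⟩
        · simp only [List.length_append, List.length_singleton]
          omega
        · rw [← M.symmetric a b]; exact hk'm
        · rw [hsplit, hrep, heq]

end CoxeterMat

namespace CoxeterMat

open CoxeterSystem (alternatingWord)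

variable {S : Type*} (M : CoxeterMat S)

lemma c_inf {i j : S} (h0 : M.m i j = 0) : -(M.c i j) = 2 := by
  unfold c
  rw [if_pos h0]
  norm_num

lemma Useq_c_nonneg {i j : S} (hij : i ≠ j) (n : ℕ) (h : M.m i j ≠ 0 → n ≤ M.m i j) :
    0 ≤ Useq (-(M.c i j)) n := by
  by_cases h0 : M.m i j = 0
  · rw [M.c_inf h0, Useq_two]
    positivity
  · rw [M.c_eq_cos hij h0]
    exact Useq_nonneg_sin (M.two_le_m hij h0) (h h0)

lemma phi_simple' (s : S) : M.phi (M.csys.simple s) = M.sigmaE s := M.phi_simple s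

lemma phi_alt_even (i j : S) (hij : i ≠ j) (r : ℕ) :
    M.phi (M.csys.wordProd (alternatingWord i j (2*r))) (sroot i)
      = Useq (-(M.c i j)) (2*r+1) • sroot i + Useq (-(M.c i j)) (2*r) • sroot j := by
  have hprod := M.csys.prod_alternatingWord_eq_mul_pow i j (2*r)
  rw [if_pos (by exact ⟨r, by omega⟩), one_mul] at hprod
  have hdiv : 2*r/2 = r := by omega
  rw [hdiv] at hprod
  rw [hprod, map_pow, map_mul, M.phi_simple' i, M.phi_simple' j]
  exact (M.rho_pow_sroot i j hij r).1

lemma phi_alt_odd (i j : S) (hij : i ≠ j) (r : ℕ) :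
    M.phi (M.csys.wordProd (alternatingWord i j (2*r+1))) (sroot i)
      = Useq (-(M.c i j)) (2*r+1) • sroot i + Useq (-(M.c i j)) (2*r+2) • sroot j := by
  have hprod := M.csys.prod_alternatingWord_eq_mul_pow i j (2*r+1)
  rw [if_neg (by simp [Nat.even_add_one, parity_simps]), ] at hprod
  have hdiv : (2*r+1)/2 = r := by omega
  rw [hdiv] at hprod
  rw [hprod, map_mul, map_pow, map_mul, M.phi_simple' j, M.phi_simple' i, mulE_apply]
  rw [(M.rho_pow_sroot i j hij r).1]
  rw [map_add, map_smul, map_smul, sigmaE_apply, sigmaE_apply, sigma_sroot, sigma_sroot_self]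
  have hji : M.c j i = M.c i j := M.c_symm j i
  rw [hji]
  have r1 : Useq (-(M.c i j)) (2*r+2)
      = (-(M.c i j)) * Useq (-(M.c i j)) (2*r+1) - Useq (-(M.c i j)) (2*r) :=
    Useq_add_two _ (2*r)
  rw [r1]
  module

lemma dihedral_pos (i j : S) (hij : i ≠ j) (u : M.Mx.Group)
    (hne : ∃ ω : List S, IJword i j ω ∧ M.csys.wordProd ω = u)
    (hdl : M.dlen i j u < M.dlen i j (u * M.csys.simple i)) :
    ∃ a b : ℝ, 0 ≤ a ∧ 0 ≤ b ∧ M.phi u (sroot i) = a • sroot i + b • sroot j := by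
  obtain ⟨ω, hw, hlen, hπ⟩ := M.dlen_spec hne
  obtain ⟨k, a, b, hab, hk_len, hkm0, hrep⟩ := M.dihedral_rep i j hij ω hw
  have hku : M.csys.wordProd (alternatingWord a b k) = u := by rw [← hrep, hπ]
  have hIJ : IJword i j (alternatingWord a b k) :=
    IJword_alternatingWord i j k a b (by tauto) (by tauto)
  have hdlek : M.dlen i j u ≤ k := by
    have := M.dlen_le hIJ hku
    rwa [CoxeterSystem.length_alternatingWord] at this
  have hkd : k = M.dlen i j u := le_antisymm (hlen ▸ hk_len) hdlek
  have hkm : M.m i j ≠ 0 → k ≤ M.m i j := hkm0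
  rcases Nat.eq_zero_or_pos k with hk0 | hkpos
  · have h0 : alternatingWord a b 0 = ([] : List S) := rfl
    rw [hk0, h0, CoxeterSystem.wordProd_nil] at hku
    refine ⟨1, 0, by norm_num, by norm_num, ?_⟩
    rw [← hku, map_one, oneE_apply]
    module
  · obtain ⟨k0, rfl⟩ : ∃ k0, k = k0 + 1 := ⟨k - 1, by omega⟩
    have hexcl : ¬ (M.csys.wordProd (alternatingWord j i (k0+1)) = u) := by
      intro hrep'
      have hsucc : alternatingWord j i (k0+1) = (alternatingWord i j k0).concat i :=
        CoxeterSystem.alternatingWord_succ j i k0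
      have husi : u * M.csys.simple i = M.csys.wordProd (alternatingWord i j k0) := by
        rw [← hrep', hsucc, CoxeterSystem.wordProd_concat,
          M.csys.simple_mul_simple_cancel_right]
      have hIJ0 : IJword i j (alternatingWord i j k0) :=
        IJword_alternatingWord i j k0 i j (Or.inl rfl) (Or.inr rfl)
      have hle := M.dlen_le hIJ0 husi.symm
      rw [CoxeterSystem.length_alternatingWord] at hle
      omega
    have hmain : M.csys.wordProd (alternatingWord i j (k0+1)) = u := by
      rcases hab with ⟨h1, h2⟩ | ⟨h1, h2⟩
      · rw [h1, h2] at hku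
        exact hku
      · exfalso
        apply hexcl
        rw [h1, h2] at hku
        exact hku
    have hklt : M.m i j ≠ 0 → k0 + 1 < M.m i j := by
      intro h0
      have hkle := hkm h0
      rcases Nat.lt_or_ge (k0+1) (M.m i j) with h | h
      · exact h
      · exfalso
        have hkeq : k0 + 1 = M.m i j := by omega
        have h2 : 2 ≤ M.m i j := M.two_le_m hij h0
        have hbraid : M.csys.wordProd (alternatingWord i j (M.Mx i j))
            = M.csys.wordProd (alternatingWord j i (M.Mx j i)) :=
          M.csys.wordProd_braidWord_eq i j
        have hMxij : M.Mx i j = M.m i j := rfl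
        have hMxji : M.Mx j i = M.m i j := M.symmetric j i
        rw [hMxij, hMxji] at hbraid
        apply hexcl
        rw [hkeq, ← hbraid, ← hkeq]
        exact hmain
    have hnn1 : 0 ≤ Useq (-(M.c i j)) (k0+1) :=
      M.Useq_c_nonneg hij (k0+1) (fun h0 => by have := hklt h0; omega)
    have hnn2 : 0 ≤ Useq (-(M.c i j)) (k0+2) :=
      M.Useq_c_nonneg hij (k0+2) (fun h0 => by have := hklt h0; omega)
    rcases Nat.even_or_odd (k0+1) with ⟨r, hr⟩ | ⟨r, hr⟩
    · refine ⟨Useq (-(M.c i j)) (k0+2), Useq (-(M.c i j)) (k0+1), hnn2, hnn1, ?_⟩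
      have h2r : k0 + 1 = 2*r := by omega
      rw [← hmain, h2r, M.phi_alt_even i j hij r]
      rw [show 2*r+1 = k0+2 by omega, show 2*r = k0+1 by omega]
    · refine ⟨Useq (-(M.c i j)) (k0+1), Useq (-(M.c i j)) (k0+2), hnn1, hnn2, ?_⟩
      have h2r : k0 + 1 = 2*r+1 := by omega
      rw [← hmain, h2r, M.phi_alt_odd i j hij r]
      rw [show 2*r+1 = k0+1 by omega, show 2*r+2 = k0+2 by omega]

lemma sroot_coord_nonneg (t p : S) : 0 ≤ (sroot t : S →₀ ℝ) p := by
  classical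
  unfold sroot
  rw [Finsupp.single_apply]
  split <;> norm_num


theorem phi_pos (n : ℕ) : ∀ (x : M.Mx.Group) (t : S), M.csys.length x = n →
    M.csys.length x < M.csys.length (x * M.csys.simple t) →
    ∀ p : S, 0 ≤ (M.phi x (sroot t)) p := by
  induction n using Nat.strong_induction_on with
  | _ n IH =>
  intro x t hn hlt p
  by_cases hx1 : x = 1
  · rw [hx1, map_one, oneE_apply]
    exact sroot_coord_nonneg t p
  · obtain ⟨j, hdesc⟩ := M.csys.exists_rightDescent_of_ne_one hx1
    have hdesc' : M.csys.length (x * M.csys.simple j) < M.csys.length x := hdesc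
    have hjt : j ≠ t := by
      intro h
      subst h
      omega
    have htj : t ≠ j := hjt.symm
    set P : ℕ → Prop := fun q => ∃ v : M.Mx.Group,
      ((∃ ω : List S, IJword t j ω ∧ M.csys.wordProd ω = v⁻¹ * x) ∧
        M.csys.length x = M.csys.length v + M.dlen t j (v⁻¹ * x)) ∧
      M.csys.length v = q with hP
    have hinv0 : (x * M.csys.simple j)⁻¹ * x = M.csys.simple j := by
      rw [mul_inv_rev, mul_assoc, inv_mul_cancel, mul_one, M.csys.inv_simple]
    have hw1 : IJword t j [j] := by
      intro y hy
      rw [List.mem_singleton] at hy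
      exact Or.inr hy
    have hPne : P (M.csys.length (x * M.csys.simple j)) := by
      refine ⟨x * M.csys.simple j, ⟨⟨⟨[j], hw1, ?_⟩, ?_⟩, rfl⟩⟩
      · rw [CoxeterSystem.wordProd_singleton, hinv0]
      · rw [hinv0]
        have hd1 : M.dlen t j (M.csys.simple j) = 1 := by
          have hle : M.dlen t j (M.csys.simple j) ≤ 1 := by
            have := M.dlen_le hw1 (CoxeterSystem.wordProd_singleton _ _)
            simpa using this
          have hge : M.csys.length (M.csys.simple j) ≤ M.dlen t j (M.csys.simple j) :=
            M.length_le_dlen ⟨[j], hw1, CoxeterSystem.wordProd_singleton _ _⟩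
          rw [M.csys.length_simple] at hge
          omega
        rw [hd1]
        have hxj := M.csys.isRightDescent_iff.mp hdesc
        omega
    set mv := sInf (setOf P) with hmv
    have hmem : mv ∈ setOf P := Nat.sInf_mem (⟨_, hPne⟩ : (setOf P).Nonempty)
    obtain ⟨v, ⟨⟨hword_v, hsum_v⟩, hlenv⟩⟩ := hmem
    set u' := v⁻¹ * x with hu'
    have hvu : v * u' = x := by rw [hu', mul_inv_cancel_left]
    have claim : ∀ c : S, (c = t ∨ c = j) →
        M.csys.length v < M.csys.length (v * M.csys.simple c) := by
      intro c hc
      by_contra hcon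
      push_neg at hcon
      have hne' : M.csys.length (v * M.csys.simple c) ≠ M.csys.length v :=
        M.csys.length_mul_simple_ne v c
      have hvc : M.csys.length (v * M.csys.simple c) < M.csys.length v := by omega
      have hinv : (v * M.csys.simple c)⁻¹ * x = M.csys.simple c * u' := by
        rw [mul_inv_rev, mul_assoc, M.csys.inv_simple, hu', ← mul_assoc]
      obtain ⟨ω, hω, hωπ⟩ := id hword_v
      have hword2 : ∃ ω2 : List S, IJword t j ω2 ∧
          M.csys.wordProd ω2 = M.csys.simple c * u' := by
        refine ⟨c :: ω, ?_, ?_⟩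
        · intro y hy
          rcases List.mem_cons.mp hy with rfl | hy'
          · exact hc
          · exact hω y hy'
        · rw [CoxeterSystem.wordProd_cons, hωπ]
      obtain ⟨ωm, hωm, hωmlen, hωmπ⟩ := M.dlen_spec ⟨ω, hω, hωπ⟩
      have hdc : M.dlen t j (M.csys.simple c * u') ≤ M.dlen t j u' + 1 := by
        have hπ2 : M.csys.wordProd (c :: ωm) = M.csys.simple c * u' := by
          rw [CoxeterSystem.wordProd_cons, hωmπ]
        have hIJ2 : IJword t j (c :: ωm) := by
          intro y hy
          rcases List.mem_cons.mp hy with rfl | hy'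
          · exact hc
          · exact hωm y hy'
        have := M.dlen_le hIJ2 hπ2
        rw [List.length_cons, hωmlen] at this
        omega
      have hdecomp : x = (v * M.csys.simple c) * (M.csys.simple c * u') := by
        rw [mul_assoc, M.csys.simple_mul_simple_cancel_left, hvu]
      have hle1 : M.csys.length x ≤ M.csys.length (v * M.csys.simple c)
          + M.dlen t j (M.csys.simple c * u') := by
        calc M.csys.length x
            = M.csys.length ((v * M.csys.simple c) * (M.csys.simple c * u')) := by
              rw [← hdecomp]
          _ ≤ M.csys.length (v * M.csys.simple c) + M.csys.length (M.csys.simple c * u') :=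
              M.csys.length_mul_le _ _
          _ ≤ M.csys.length (v * M.csys.simple c) + M.dlen t j (M.csys.simple c * u') :=
              Nat.add_le_add_left (M.length_le_dlen hword2) _
      have hv1 : M.csys.length (v * M.csys.simple c) + 1 = M.csys.length v := by
        have := M.csys.length_mul_simple v c
        omega
      have hsum2 : M.csys.length x = M.csys.length (v * M.csys.simple c)
          + M.dlen t j (M.csys.simple c * u') := by omega
      have hPm : M.csys.length (v * M.csys.simple c) ∈ setOf P := by
        refine ⟨v * M.csys.simple c, ⟨⟨?_, ?_⟩, rfl⟩⟩
        · rw [hinv]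
          exact hword2
        · rw [hinv]
          exact hsum2
      have := Nat.sInf_le hPm
      omega
    have hu'ne1 : u' ≠ 1 := by
      intro h1
      have hxv : x = v := by rw [← hvu, h1, mul_one]
      have hcl := claim j (Or.inr rfl)
      rw [← hxv] at hcl
      omega
    have hdpos : 1 ≤ M.dlen t j u' := by
      by_contra h
      push_neg at h
      have h0 : M.dlen t j u' = 0 := by omega
      obtain ⟨ωm, hωm, hωmlen, hωmπ⟩ := M.dlen_spec hword_v
      rw [h0] at hωmlen
      have : ωm = [] := List.length_eq_zero_iff.mp hωmlen
      rw [this, CoxeterSystem.wordProd_nil] at hωmπ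
      exact hu'ne1 hωmπ.symm
    have hlvn : M.csys.length v < n := by omega
    have hdl : M.dlen t j u' < M.dlen t j (u' * M.csys.simple t) := by
      by_contra hcon
      push_neg at hcon
      obtain ⟨ω, hω, hωπ⟩ := id hword_v
      have hne2 : ∃ ω2 : List S, IJword t j ω2 ∧
          M.csys.wordProd ω2 = u' * M.csys.simple t := by
        refine ⟨ω ++ [t], ?_, ?_⟩
        · intro y hy
          rcases List.mem_append.mp hy with hy' | hy'
          · exact hω y hy'
          · rw [List.mem_singleton] at hy'
            exact Or.inl hy'
        · rw [M.csys.wordProd_append, CoxeterSystem.wordProd_singleton, hωπ]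
      have hp1 : M.dlen t j u' % 2 = M.csys.length u' % 2 := M.dlen_mod_two hword_v
      have hp2 : M.dlen t j (u' * M.csys.simple t) % 2
          = M.csys.length (u' * M.csys.simple t) % 2 := M.dlen_mod_two hne2
      have hpm := M.csys.length_mul_simple u' t
      have hne3 : M.dlen t j (u' * M.csys.simple t) + 1 ≤ M.dlen t j u' := by omega
      have hxst : x * M.csys.simple t = v * (u' * M.csys.simple t) := by
        rw [← hvu, mul_assoc]
      have hfin : M.csys.length (x * M.csys.simple t)
          ≤ M.csys.length v + M.dlen t j (u' * M.csys.simple t) := by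
        calc M.csys.length (x * M.csys.simple t)
            = M.csys.length (v * (u' * M.csys.simple t)) := by rw [hxst]
          _ ≤ M.csys.length v + M.csys.length (u' * M.csys.simple t) :=
              M.csys.length_mul_le _ _
          _ ≤ M.csys.length v + M.dlen t j (u' * M.csys.simple t) :=
              Nat.add_le_add_left (M.length_le_dlen hne2) _
      omega
    obtain ⟨aa, bb, haa, hbb, hformula⟩ := M.dihedral_pos t j htj u' hword_v hdl
    have h1 := IH (M.csys.length v) hlvn v t rfl (claim t (Or.inl rfl)) p
    have h2 := IH (M.csys.length v) hlvn v j rfl (claim j (Or.inr rfl)) p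
    have hphix : M.phi x (sroot t)
        = aa • (M.phi v (sroot t)) + bb • (M.phi v (sroot j)) := by
      rw [← hvu, map_mul, mulE_apply, hformula, map_add, map_smul, map_smul]
    rw [hphix, Finsupp.add_apply, Finsupp.smul_apply, Finsupp.smul_apply, smul_eq_mul,
      smul_eq_mul]
    have := mul_nonneg haa h1
    have := mul_nonneg hbb h2
    linarith

theorem root_dichotomy {w : (S →₀ ℝ) ≃ₗ[ℝ] (S →₀ ℝ)} (hw : w ∈ M.Wgrp) (t : S) :
    (∀ p, 0 ≤ (w (sroot t)) p) ∨ (∀ p, (w (sroot t)) p ≤ 0) := by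
  obtain ⟨x, hx⟩ := M.Wgrp_le_range hw
  rcases lt_trichotomy (M.csys.length x) (M.csys.length (x * M.csys.simple t)) with h | h | h
  · left
    intro p
    rw [← hx]
    exact M.phi_pos (M.csys.length x) x t rfl h p
  · exact absurd h.symm (M.csys.length_mul_simple_ne x t)
  · right
    intro p
    have hyt : (x * M.csys.simple t) * M.csys.simple t = x :=
      M.csys.simple_mul_simple_cancel_right t
    have hylt : M.csys.length (x * M.csys.simple t)
        < M.csys.length ((x * M.csys.simple t) * M.csys.simple t) := by
      rw [hyt]
      exact h
    have hpos := M.phi_pos (M.csys.length (x * M.csys.simple t)) (x * M.csys.simple t) t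
      rfl hylt p
    have hx' : M.phi x (sroot t)
        = - (M.phi (x * M.csys.simple t) (sroot t)) := by
      conv_lhs => rw [← hyt]
      rw [map_mul, mulE_apply, phi_simple', sigmaE_apply, sigma_sroot_self, map_neg]
    rw [← hx, hx', Finsupp.neg_apply]
    linarith

end CoxeterMat

namespace CoxeterMat

variable {S : Type*} (M : CoxeterMat S)

lemma permV_sroot (g : Equiv.Perm S) (s : S) :
    (permV g : (S →₀ ℝ) ≃ₗ[ℝ] (S →₀ ℝ)) (sroot s) = sroot (g s) := by
  unfold permV sroot
  rw [Finsupp.domLCongr_single]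

lemma permV_single (g : Equiv.Perm S) (s : S) (b : ℝ) :
    (permV g : (S →₀ ℝ) ≃ₗ[ℝ] (S →₀ ℝ)) (Finsupp.single s b) = Finsupp.single (g s) b := by
  unfold permV
  rw [Finsupp.domLCongr_single]

lemma permV_coord (g : Equiv.Perm S) (v : S →₀ ℝ) (p : S) :
    ((permV g : (S →₀ ℝ) ≃ₗ[ℝ] (S →₀ ℝ)) v) p = v (g⁻¹ p) := by
  unfold permV
  rw [Finsupp.domLCongr_apply, Finsupp.domCongr_apply, Finsupp.equivMapDomain_apply]
  rfl

lemma WfixG_sub_Wgrp {G : Subgroup (Equiv.Perm S)} {w : (S →₀ ℝ) ≃ₗ[ℝ] (S →₀ ℝ)}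
    (h : w ∈ M.WfixG G) : w ∈ M.Wgrp := h.1

lemma WfixG_mul {G : Subgroup (Equiv.Perm S)} {w w' : (S →₀ ℝ) ≃ₗ[ℝ] (S →₀ ℝ)}
    (h : w ∈ M.WfixG G) (h' : w' ∈ M.WfixG G) : w * w' ∈ M.WfixG G := by
  refine ⟨mul_mem h.1 h'.1, fun g hg => ?_⟩
  have c1 : Commute (permV g) w := h.2 g hg
  have c2 : Commute (permV g) w' := h'.2 g hg
  exact c1.mul_right c2

lemma WfixG_inv {G : Subgroup (Equiv.Perm S)} {w : (S →₀ ℝ) ≃ₗ[ℝ] (S →₀ ℝ)}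
    (h : w ∈ M.WfixG G) : w⁻¹ ∈ M.WfixG G := by
  refine ⟨inv_mem h.1, fun g hg => ?_⟩
  have c1 : Commute (permV g) w := h.2 g hg
  exact c1.inv_right

/-- action of a commuting product of reflections on a simple root -/
lemma uprod_apply (X : Finset S) (hcomm : ∀ t ∈ X, ∀ t' ∈ X, t ≠ t' → M.c t t' = 0)
    (comm : (↑X : Set S).Pairwise fun a b => Commute (M.sigmaE a) (M.sigmaE b)) (s : S) :
    (X.noncommProd (fun t => M.sigmaE t) comm) (sroot s)
      = sroot s - ∑ t ∈ X, (M.c t s) • (sroot t : S →₀ ℝ) := by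
  classical
  induction X using Finset.induction_on with
  | empty => simp
  | @insert a Y ha ih =>
      have hcommY : ∀ t ∈ Y, ∀ t' ∈ Y, t ≠ t' → M.c t t' = 0 := by
        intro t ht t' ht' htt'
        exact hcomm t (Finset.mem_insert_of_mem ht) t' (Finset.mem_insert_of_mem ht') htt'
      have commY : (↑Y : Set S).Pairwise fun a b => Commute (M.sigmaE a) (M.sigmaE b) := by
        apply comm.mono
        intro z hz
        simp only [Finset.coe_insert, Set.mem_insert_iff]
        exact Or.inr hz
      rw [Finset.noncommProd_insert_of_notMem Y a _ comm ha, mulE_apply, ih hcommY commY]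
      rw [Finset.sum_insert ha]
      rw [sigmaE_apply, map_sub, sigma_sroot, map_sum]
      have hfix : ∀ t ∈ Y, M.sigma a ((M.c t s) • (sroot t : S →₀ ℝ))
          = (M.c t s) • (sroot t : S →₀ ℝ) := by
        intro t ht
        have hta : t ≠ a := by
          intro h
          exact ha (h ▸ ht)
        have hca : M.c a t = 0 :=
          hcomm a (Finset.mem_insert_self a Y) t (Finset.mem_insert_of_mem ht) hta.symm
        rw [map_smul, sigma_sroot, hca, zero_smul, sub_zero]
      rw [Finset.sum_congr rfl hfix]
      abel

lemma sigmaE_commute {t t' : S} (htt' : t ≠ t') (hc : M.c t t' = 0) :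
    Commute (M.sigmaE t) (M.sigmaE t') := by
  have hc' : M.c t' t = 0 := by rw [c_symm]; exact hc
  unfold Commute SemiconjBy
  apply LinearEquiv.toLinearMap_injective
  apply Finsupp.lhom_ext
  intro u b
  have hb : Finsupp.single u b = b • (sroot u : S →₀ ℝ) := by simp [sroot, Finsupp.smul_single]
  rw [LinearEquiv.coe_coe, LinearEquiv.coe_coe, hb, map_smul, map_smul]
  congr 1
  have key : ∀ x y : S, M.c x y = 0 → M.sigma x (M.sigma y (sroot u))
      = sroot u - (M.c y u) • sroot y - (M.c x u) • sroot x := by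
    intro x y hxy
    rw [sigma_sroot, map_sub, map_smul, sigma_sroot, sigma_sroot, hxy, zero_smul, sub_zero]
    abel
  rw [mulE_apply, mulE_apply, sigmaE_apply, sigmaE_apply, sigmaE_apply, sigmaE_apply,
    key t t' hc, key t' t hc']
  abel

end CoxeterMat

namespace CoxeterMat

variable {S : Type*} (M : CoxeterMat S)

/-- The set of simple generators whose root can be sent to a vector with a negative
coordinate by a `G`-fixed element. -/
def Nset (G : Subgroup (Equiv.Perm S)) : Set S :=
  {t | ∃ u ∈ M.WfixG G, ∃ p : S, (u (sroot t)) p < 0}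

lemma not_Nset_nonneg {G : Subgroup (Equiv.Perm S)} {t : S} (ht : t ∉ M.Nset G)
    {u : (S →₀ ℝ) ≃ₗ[ℝ] (S →₀ ℝ)} (hu : u ∈ M.WfixG G) (p : S) : 0 ≤ (u (sroot t)) p := by
  by_contra h
  push_neg at h
  exact ht ⟨u, hu, p, h⟩

set_option maxHeartbeats 1000000 in
lemma stepC {G : Subgroup (Equiv.Perm S)}
    (hA : ∀ a ∈ M.PhiPos, ∃ w ∈ M.WfixG G, ∃ s : S, a = w (sroot s))
    {t x : S} (ht : t ∉ M.Nset G) (hx : x ∉ M.Nset G) (htx : t ≠ x) : M.c t x = 0 := by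
  classical
  by_contra hc0
  have hcle : M.c t x ≤ 0 := M.c_nonpos htx
  have hclt : M.c t x < 0 := lt_of_le_of_ne hcle hc0
  set β := M.sigmaE t (sroot x) with hβ
  have hβeq : β = sroot x - (M.c t x) • sroot t := by
    rw [hβ, sigmaE_apply, sigma_sroot]
  have hβPhi : β ∈ M.Phi := ⟨M.sigmaE t, M.sigmaE_mem_Wgrp t, x, rfl⟩
  have hβpos : β ∈ M.PhiPos := by
    refine ⟨hβPhi, fun p => ?_⟩
    rw [hβeq]
    rw [Finsupp.sub_apply, Finsupp.smul_apply, smul_eq_mul]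
    have h1 := sroot_coord_nonneg x p
    have h2 := sroot_coord_nonneg t p
    nlinarith
  obtain ⟨w, hw, r, hwr⟩ := hA β hβpos
  set δ := w⁻¹ (sroot t) with hδ
  set δ' := w⁻¹ (sroot x) with hδ'
  have hwinv : w⁻¹ ∈ M.WfixG G := M.WfixG_inv hw
  have hδpos : ∀ p, 0 ≤ δ p := fun p => M.not_Nset_nonneg ht hwinv p
  have hδ'pos : ∀ p, 0 ≤ δ' p := fun p => M.not_Nset_nonneg hx hwinv p
  have hre : (sroot r : S →₀ ℝ) = δ' - (M.c t x) • δ := by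
    have h1 : w⁻¹ β = sroot r := by
      rw [hwr, invE_apply, LinearEquiv.symm_apply_apply]
    rw [← h1, hβeq, map_sub, map_smul]
  have hcoord : ∀ p, (sroot r : S →₀ ℝ) p = δ' p - (M.c t x) * δ p := by
    intro p
    rw [hre, Finsupp.sub_apply, Finsupp.smul_apply, smul_eq_mul]
  have hvanish : ∀ p, p ≠ r → δ p = 0 ∧ δ' p = 0 := by
    intro p hp
    have h0 : (sroot r : S →₀ ℝ) p = 0 := by
      unfold sroot
      rw [Finsupp.single_apply, if_neg (fun h => hp h.symm)]
    have := hcoord p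
    rw [h0] at this
    constructor <;> nlinarith [hδpos p, hδ'pos p]
  have hBδ : M.bform δ δ = 2 := by
    rw [hδ]
    rw [M.bform_w_w (inv_mem (M.WfixG_sub_Wgrp hw)), bform_sroot_sroot, c_diag]
  have hBδ' : M.bform δ' δ' = 2 := by
    rw [hδ']
    rw [M.bform_w_w (inv_mem (M.WfixG_sub_Wgrp hw)), bform_sroot_sroot, c_diag]
  have hδsingle : δ = (δ r) • (sroot r : S →₀ ℝ) := by
    ext p
    rw [Finsupp.smul_apply]
    by_cases hp : p = r
    · subst hp
      unfold sroot
      rw [Finsupp.single_apply, if_pos rfl]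
      simp
    · rw [(hvanish p hp).1]
      unfold sroot
      rw [Finsupp.single_apply, if_neg (fun h => hp h.symm)]
      simp
  have hδ'single : δ' = (δ' r) • (sroot r : S →₀ ℝ) := by
    ext p
    rw [Finsupp.smul_apply]
    by_cases hp : p = r
    · subst hp
      unfold sroot
      rw [Finsupp.single_apply, if_pos rfl]
      simp
    · rw [(hvanish p hp).2]
      unfold sroot
      rw [Finsupp.single_apply, if_neg (fun h => hp h.symm)]
      simp
  have hd1 : δ r = 1 := by
    have h2 : M.bform δ δ = (δ r) * ((δ r) * 2) := by
      conv_lhs => rw [hδsingle]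
      rw [map_smul, map_smul, LinearMap.smul_apply, bform_sroot_sroot, c_diag, smul_eq_mul,
        smul_eq_mul]
    rw [hBδ] at h2
    have := hδpos r
    nlinarith
  have hd2 : δ' r = 1 := by
    have h2 : M.bform δ' δ' = (δ' r) * ((δ' r) * 2) := by
      conv_lhs => rw [hδ'single]
      rw [map_smul, map_smul, LinearMap.smul_apply, bform_sroot_sroot, c_diag, smul_eq_mul,
        smul_eq_mul]
    rw [hBδ'] at h2
    have := hδ'pos r
    nlinarith
  have hfinal := hcoord r
  unfold sroot at hfinal
  rw [Finsupp.single_apply, if_pos rfl, hd1, hd2] at hfinal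
  nlinarith

lemma c_perm {G : Subgroup (Equiv.Perm S)}
    (hG : ∀ g ∈ G, ∀ s t, M.m (g s) (g t) = M.m s t) {g : Equiv.Perm S} (hg : g ∈ G)
    (s t : S) : M.c (g s) (g t) = M.c s t := by
  unfold c
  rw [hG g hg s t]

lemma uprod_centralize {G : Subgroup (Equiv.Perm S)}
    (hG : ∀ g ∈ G, ∀ s t, M.m (g s) (g t) = M.m s t) {g : Equiv.Perm S} (hg : g ∈ G)
    (X : Finset S) (hXg : ∀ t, t ∈ X ↔ g t ∈ X)
    (hcomm0 : ∀ t ∈ X, ∀ t' ∈ X, t ≠ t' → M.c t t' = 0)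
    (comm : (↑X : Set S).Pairwise fun a b => Commute (M.sigmaE a) (M.sigmaE b)) :
    (permV g : (S →₀ ℝ) ≃ₗ[ℝ] (S →₀ ℝ)) * (X.noncommProd (fun t => M.sigmaE t) comm)
      = (X.noncommProd (fun t => M.sigmaE t) comm) * permV g := by
  apply LinearEquiv.toLinearMap_injective
  apply Finsupp.lhom_ext
  intro p b
  have hb : Finsupp.single p b = b • (sroot p : S →₀ ℝ) := by simp [sroot, Finsupp.smul_single]
  rw [LinearEquiv.coe_coe, LinearEquiv.coe_coe, hb, map_smul, map_smul]
  congr 1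
  rw [mulE_apply, mulE_apply, permV_sroot, M.uprod_apply X hcomm0 comm,
    M.uprod_apply X hcomm0 comm, map_sub, permV_sroot, map_sum]
  congr 1
  rw [Finset.sum_congr rfl (fun t _ => by rw [map_smul, permV_sroot])]
  apply Finset.sum_equiv (g : Equiv.Perm S) hXg
  intro t _
  rw [M.c_perm hG hg t p]

lemma stepE {G : Subgroup (Equiv.Perm S)}
    (hG : ∀ g ∈ G, ∀ s t, M.m (g s) (g t) = M.m s t)
    (hfin : ∀ s : S, {t | ∃ g ∈ G, g s = t}.Finite)
    (hA : ∀ a ∈ M.PhiPos, ∃ w ∈ M.WfixG G, ∃ s : S, a = w (sroot s)) (s : S) :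
    s ∈ M.Nset G := by
  classical
  by_contra hs
  set X : Finset S := (hfin s).toFinset with hX
  have hmemX : ∀ t, t ∈ X ↔ ∃ g ∈ G, g s = t := by
    intro t
    rw [hX, Set.Finite.mem_toFinset]
    rfl
  have hsX : s ∈ X := (hmemX s).mpr ⟨1, G.one_mem, rfl⟩
  have hNX : ∀ t ∈ X, t ∉ M.Nset G := by
    intro t htX hNt
    apply hs
    obtain ⟨g, hg, hgs⟩ := (hmemX t).1 htX
    obtain ⟨u, hu, p, hp⟩ := hNt
    refine ⟨u, hu, g⁻¹ p, ?_⟩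
    have hcent := hu.2 g hg
    have hkey : u (sroot t) = (permV g : (S →₀ ℝ) ≃ₗ[ℝ] (S →₀ ℝ)) (u (sroot s)) := by
      rw [← hgs, ← permV_sroot]
      calc u ((permV g : (S →₀ ℝ) ≃ₗ[ℝ] (S →₀ ℝ)) (sroot s))
          = (u * permV g) (sroot s) := rfl
        _ = ((permV g : (S →₀ ℝ) ≃ₗ[ℝ] (S →₀ ℝ)) * u) (sroot s) := by rw [hcent]
        _ = (permV g : (S →₀ ℝ) ≃ₗ[ℝ] (S →₀ ℝ)) (u (sroot s)) := rfl
    rw [hkey, permV_coord] at hp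
    exact hp
  have hcomm0 : ∀ t ∈ X, ∀ t' ∈ X, t ≠ t' → M.c t t' = 0 := by
    intro t ht t' ht' htt'
    exact M.stepC hA (hNX t ht) (hNX t' ht') htt'
  have comm : (↑X : Set S).Pairwise fun a b => Commute (M.sigmaE a) (M.sigmaE b) := by
    intro a ha b hb hab
    exact M.sigmaE_commute hab (hcomm0 a (Finset.mem_coe.mp ha) b (Finset.mem_coe.mp hb) hab)
  set u : (S →₀ ℝ) ≃ₗ[ℝ] (S →₀ ℝ) := X.noncommProd (fun t => M.sigmaE t) comm with hu
  have huW : u ∈ M.Wgrp :=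
    M.Wgrp.noncommProd_mem comm (fun c _ => M.sigmaE_mem_Wgrp c)
  have hXstab : ∀ g ∈ G, ∀ t, t ∈ X ↔ g t ∈ X := by
    intro g hg t
    constructor
    · intro ht
      obtain ⟨h, hh, hhs⟩ := (hmemX t).1 ht
      exact (hmemX (g t)).mpr ⟨g * h, G.mul_mem hg hh, by simp [Equiv.Perm.mul_apply, hhs]⟩
    · intro ht
      obtain ⟨h, hh, hhs⟩ := (hmemX (g t)).1 ht
      refine (hmemX t).mpr ⟨g⁻¹ * h, G.mul_mem (G.inv_mem hg) hh, ?_⟩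
      simp [Equiv.Perm.mul_apply, hhs]
  have hcent : ∀ g ∈ G, (permV g : (S →₀ ℝ) ≃ₗ[ℝ] (S →₀ ℝ)) * u = u * permV g := by
    intro g hg
    exact M.uprod_centralize hG hg X (hXstab g hg) hcomm0 comm
  have huA : u (sroot s) = - sroot s := by
    rw [hu, M.uprod_apply X hcomm0 comm s]
    have hsum : ∑ t ∈ X, (M.c t s) • (sroot t : S →₀ ℝ) = (2:ℝ) • sroot s := by
      rw [Finset.sum_eq_single_of_mem s hsX]
      · rw [c_diag]
      · intro t ht hts
        rw [hcomm0 t ht s hsX hts, zero_smul]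
    rw [hsum]
    module
  apply hs
  refine ⟨u, ⟨huW, hcent⟩, s, ?_⟩
  rw [huA]
  unfold sroot
  rw [Finsupp.neg_apply, Finsupp.single_apply, if_pos rfl]
  norm_num

end CoxeterMat

/-- Let `G` be a group of symmetries of `Γ` with all orbits of `S` finite. Then every
positive root is of the form `w(α_s)` with `w ∈ W^G` and `s ∈ S` if and only if every root
is of this form. -/
theorem stmt19 {S : Type*} (M : CoxeterMat S) (G : Subgroup (Equiv.Perm S))
    (hG : ∀ g ∈ G, ∀ s t, M.m (g s) (g t) = M.m s t)
    (hfin : ∀ s : S, {t | ∃ g ∈ G, g s = t}.Finite) :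
    (∀ a ∈ M.PhiPos, ∃ w ∈ M.WfixG G, ∃ s : S, a = w (sroot s)) ↔
    (∀ a ∈ M.Phi, ∃ w ∈ M.WfixG G, ∃ s : S, a = w (sroot s)) := by
  constructor
  · intro hA a ha
    obtain ⟨w, hwW, s, rfl⟩ := ha
    rcases M.root_dichotomy hwW s with hpos | hneg
    · exact hA _ ⟨⟨w, hwW, s, rfl⟩, hpos⟩
    · set b := (w * M.sigmaE s) (sroot s) with hb
      have hbeq : b = - (w (sroot s)) := by
        rw [hb, mulE_apply, sigmaE_apply, sigma_sroot_self, map_neg]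
      have hbPhi : b ∈ M.Phi := ⟨w * M.sigmaE s, mul_mem hwW (M.sigmaE_mem_Wgrp s), s, rfl⟩
      have hbPos : b ∈ M.PhiPos := by
        refine ⟨hbPhi, fun p => ?_⟩
        rw [hbeq, Finsupp.neg_apply]
        linarith [hneg p]
      obtain ⟨w', hw', r, hw'r⟩ := hA b hbPos
      obtain ⟨u, hu, p0, hup0⟩ := M.stepE hG hfin hA r
      have huW : u ∈ M.Wgrp := hu.1
      have huneg : ∀ p, (u (sroot r)) p ≤ 0 := by
        rcases M.root_dichotomy huW r with h | h
        · exact absurd (h p0) (by linarith)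
        · exact h
      set b2 := (u * M.sigmaE r) (sroot r) with hb2
      have hb2eq : b2 = - (u (sroot r)) := by
        rw [hb2, mulE_apply, sigmaE_apply, sigma_sroot_self, map_neg]
      have hb2Pos : b2 ∈ M.PhiPos := by
        refine ⟨⟨u * M.sigmaE r, mul_mem huW (M.sigmaE_mem_Wgrp r), r, rfl⟩, fun p => ?_⟩
        rw [hb2eq, Finsupp.neg_apply]
        linarith [huneg p]
      obtain ⟨w'', hw'', q, hw''q⟩ := hA b2 hb2Pos
      refine ⟨w' * u⁻¹ * w'', M.WfixG_mul (M.WfixG_mul hw' (M.WfixG_inv hu)) hw'', q, ?_⟩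
      have e1 : (w' * u⁻¹ * w'') (sroot q) = w' (u⁻¹ (w'' (sroot q))) := rfl
      rw [e1, ← hw''q, hb2eq, map_neg, invE_apply, LinearEquiv.symm_apply_apply, map_neg,
        ← hw'r, hbeq, neg_neg]
  · intro hB a ha
    exact hB a ha.1
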